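/- Let a = (a_1,...,a_n) with 0 < a_1 ≤ ... ≤ a_n, and fix 1 ≤ k ≤ n−1. Then a_1 σ_{k-1;1}(a)/σ_k(a) = k/n = a_n σ_{k-1;n}(a)/σ_k(a) holds if and only if a = C·(1,1,...,1) for some constant C > 0. -/

import Mathlib

open Finset

/-- The `k`-th elementary symmetric polynomial of `a : Fin n → ℝ`. -/
noncomputable def esymm (n k : ℕ) (a : Fin n → ℝ) : ℝ :=
  ∑ s ∈ Finset.powersetCard k (Finset.univ : Finset (Fin n)), ∏ i ∈ s, a i

/-- The `k`-th elementary symmetric polynomial of `a` with the `i`-th entry removed. -/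
noncomputable def esymmDel (n k : ℕ) (a : Fin n → ℝ) (i : Fin n) : ℝ :=
  ∑ s ∈ Finset.powersetCard k ((Finset.univ : Finset (Fin n)).erase i), ∏ j ∈ s, a j

private lemma del_split (n m : ℕ) (a : Fin n → ℝ) (i j : Fin n) (hij : i ≠ j) :
    esymmDel n (m + 1) a i =
      (∑ s ∈ powersetCard (m + 1) ((univ.erase i).erase j), ∏ t ∈ s, a t) +
      a j * ∑ s ∈ powersetCard m ((univ.erase i).erase j), ∏ t ∈ s, a t := by
  set T := (univ.erase i).erase j with hT
  have hjT : j ∉ T := Finset.notMem_erase _ _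
  have hins : insert j T = univ.erase i := by
    apply Finset.insert_erase
    simp [Finset.mem_erase, Ne.symm hij]
  rw [esymmDel, ← hins, Finset.powersetCard_succ_insert hjT, Finset.sum_union]
  · congr 1
    rw [Finset.sum_image (by
      intro s hs t ht h
      have hs' : j ∉ s := fun h' => hjT ((Finset.mem_powersetCard.1 hs).1 h')
      have ht' : j ∉ t := fun h' => hjT ((Finset.mem_powersetCard.1 ht).1 h')
      rw [← Finset.erase_insert hs', ← Finset.erase_insert ht', h])]
    rw [Finset.mul_sum]
    apply Finset.sum_congr rfl
    intro s hs
    have hs' : j ∉ s := fun h' => hjT ((Finset.mem_powersetCard.1 hs).1 h')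
    rw [Finset.prod_insert hs']
  · rw [Finset.disjoint_left]
    intro s hs hs'
    have h1 : j ∉ s := fun h' => hjT ((Finset.mem_powersetCard.1 hs).1 h')
    obtain ⟨t, _, rfl⟩ := Finset.mem_image.1 hs'
    exact h1 (Finset.mem_insert_self _ _)

private lemma key (n m : ℕ) (a : Fin n → ℝ) (i j : Fin n) (hij : i ≠ j) :
    a j * esymmDel n m a j - a i * esymmDel n m a i
      = (a j - a i) * ∑ s ∈ powersetCard m ((univ.erase i).erase j), ∏ t ∈ s, a t := by
  cases m with
  | zero => simp [esymmDel]
  | succ m =>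
      have h1 := del_split n m a i j hij
      have h2 := del_split n m a j i (Ne.symm hij)
      rw [Finset.erase_right_comm] at h2
      rw [h1, h2]; ring

private lemma esymm_pos (n m : ℕ) (a : Fin n → ℝ) (ha : ∀ i, 0 < a i) (hm : m ≤ n) :
    0 < esymm n m a := by
  apply Finset.sum_pos
  · intro s _
    exact Finset.prod_pos fun i _ => ha i
  · rw [Finset.powersetCard_nonempty]
    simpa using hm

/-- For 1 ≤ k ≤ n−1, ξ̲_k(a) = k/n = ξ̄_k(a) holds iff a = C·(1,...,1) for some C > 0. -/
theorem xi_eq_iff_const (n : ℕ) (hn : 0 < n) (a : Fin n → ℝ)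
    (ha : ∀ i, 0 < a i) (hmono : Monotone a) (k : ℕ) (hk1 : 1 ≤ k) (hk2 : k ≤ n - 1) :
    (a ⟨0, hn⟩ * esymmDel n (k - 1) a ⟨0, hn⟩ / esymm n k a = (k : ℝ) / n ∧
     a ⟨n - 1, by omega⟩ * esymmDel n (k - 1) a ⟨n - 1, by omega⟩ / esymm n k a = (k : ℝ) / n)
    ↔ ∃ C : ℝ, 0 < C ∧ a = fun _ => C := by
  have hn2 : 2 ≤ n := by omega
  set i : Fin n := ⟨0, hn⟩ with hi
  set j : Fin n := ⟨n - 1, by omega⟩ with hj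
  have hij : i ≠ j := by
    simp only [hi, hj, Fin.mk.injEq, Ne]
    omega
  have hσ : 0 < esymm n k a := esymm_pos n k a ha (by omega)
  constructor
  · rintro ⟨h1, h2⟩
    have he : a i * esymmDel n (k - 1) a i = a j * esymmDel n (k - 1) a j := by
      have e1 := (div_eq_div_iff hσ.ne' (by positivity : (0:ℝ) < n).ne').1 h1
      have e2 := (div_eq_div_iff hσ.ne' (by positivity : (0:ℝ) < n).ne').1 h2
      have e3 : a i * esymmDel n (k - 1) a i * (n:ℝ) = a j * esymmDel n (k - 1) a j * (n:ℝ) :=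
        e1.trans e2.symm
      exact mul_right_cancel₀ (by positivity : (0:ℝ) < n).ne' e3
    have hkey := key n (k - 1) a i j hij
    have hE : 0 < ∑ s ∈ powersetCard (k - 1) ((univ.erase i).erase j), ∏ t ∈ s, a t := by
      apply Finset.sum_pos
      · intro s _
        exact Finset.prod_pos fun t _ => ha t
      · rw [Finset.powersetCard_nonempty]
        rw [Finset.card_erase_of_mem (by simp [Finset.mem_erase, Ne.symm hij]),
          Finset.card_erase_of_mem (Finset.mem_univ _), Finset.card_univ, Fintype.card_fin]
        omega
    have haij : a j = a i := by
      rw [← he, sub_self, zero_eq_mul] at hkey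
      rcases hkey with h | h
      · linarith
      · exact absurd h hE.ne'
    refine ⟨a i, ha i, funext fun t => ?_⟩
    have ht1 : a i ≤ a t := hmono (by simp [hi, Fin.le_def])
    have ht2 : a t ≤ a j := hmono (by simp [hj, Fin.le_def]; omega)
    linarith
  · rintro ⟨C, hC, rfl⟩
    have hdel : ∀ t : Fin n, esymmDel n (k - 1) (fun _ => C) t
        = ((n - 1).choose (k - 1) : ℝ) * C ^ (k - 1) := by
      intro t
      rw [esymmDel]
      rw [Finset.sum_congr rfl (fun s hs => by
        rw [Finset.prod_const, (Finset.mem_powersetCard.1 hs).2])]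
      rw [Finset.sum_const, Finset.card_powersetCard,
        Finset.card_erase_of_mem (Finset.mem_univ _), Finset.card_univ, Fintype.card_fin,
        nsmul_eq_mul]
    have hsym : esymm n k (fun _ => C) = (n.choose k : ℝ) * C ^ k := by
      rw [esymm]
      rw [Finset.sum_congr rfl (fun s hs => by
        rw [Finset.prod_const, (Finset.mem_powersetCard.1 hs).2])]
      rw [Finset.sum_const, Finset.card_powersetCard, Finset.card_univ, Fintype.card_fin,
        nsmul_eq_mul]
    have hchoose : (n : ℝ) * ((n - 1).choose (k - 1)) = (n.choose k : ℝ) * k := by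
      have := Nat.add_one_mul_choose_eq (n - 1) (k - 1)
      have h1 : n - 1 + 1 = n := by omega
      have h2 : k - 1 + 1 = k := by omega
      rw [h1, h2] at this
      exact_mod_cast congrArg (Nat.cast : ℕ → ℝ) this
    have hCk : C * C ^ (k - 1) = C ^ k := by
      conv_rhs => rw [show k = (k - 1) + 1 by omega]
      rw [pow_succ]; ring
    have hch0 : (0:ℝ) < (n.choose k : ℝ) := by
      exact_mod_cast Nat.choose_pos (by omega : k ≤ n)
    have hgoal : C * (((n - 1).choose (k - 1) : ℝ) * C ^ (k - 1)) /
        ((n.choose k : ℝ) * C ^ k) = (k : ℝ) / n := by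
      rw [show C * (((n - 1).choose (k - 1) : ℝ) * C ^ (k - 1))
          = ((n - 1).choose (k - 1) : ℝ) * C ^ k by rw [← hCk]; ring]
      rw [div_eq_div_iff (by positivity) (by positivity : (0:ℝ) < n).ne']
      have hCk0 : (0:ℝ) < C ^ k := by positivity
      nlinarith [hchoose]
    exact ⟨by rw [hdel, hsym]; exact hgoal, by rw [hdel, hsym]; exact hgoal⟩
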